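/- Let μ* be a global minimizer of F over ℝ^m. Then for every j ∈ {1,…,m} there exists i ∈ {1,…,n} with j ∈ 𝒥_i(μ*); that is, {1,…,m} ⊆ ∪_{i=1}^n 𝒥_i(μ*). -/
import Mathlib


open scoped Classical

noncomputable section

/-- Extended valuation vector of buyer `i`: index `0` gets value `1` (the convention
`v_{i0} = 1`), index `j+1` gets `v i j`. -/
def extV {n m : ℕ} (v : Fin n → Fin m → ℝ) (i : Fin n) : Fin (m + 1) → ℝ :=
  Fin.cons 1 (v i)

/-- Extended log-price vector: index `0` gets `0` (the convention `μ₀ = 0`),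
index `j+1` gets `μ j`. -/
def extMu {m : ℕ} (μ : Fin m → ℝ) : Fin (m + 1) → ℝ :=
  Fin.cons 0 μ

/-- The smoothed weight `exp((log v_{ij} − μ_j)/δ) = v_{ij}^{1/δ} · exp(−μ_j/δ)`,
with the conventions `log 0 = −∞`, `exp (−∞) = 0` (via `0 ^ (1/δ) = 0` for `δ > 0`). -/
def wt {n m : ℕ} (v : Fin n → Fin m → ℝ) (δ : ℝ) (μ : Fin m → ℝ) (i : Fin n)
    (j : Fin (m + 1)) : ℝ :=
  extV v i j ^ (1 / δ) * Real.exp (-extMu μ j / δ)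

/-- The smoothed objective `F_δ`. -/
def Fd {n m : ℕ} (B : Fin n → ℝ) (v : Fin n → Fin m → ℝ) (δ : ℝ) (μ : Fin m → ℝ) : ℝ :=
  (∑ j, Real.exp (μ j)) + δ * ∑ i, B i * Real.log (∑ j, wt v δ μ i j)

/-- The gradient of the smoothed objective `F_δ`. -/
def gradFd {n m : ℕ} (B : Fin n → ℝ) (v : Fin n → Fin m → ℝ) (δ : ℝ) (μ : Fin m → ℝ)
    (j : Fin m) : ℝ :=
  Real.exp (μ j) - ∑ i, B i * (wt v δ μ i j.succ / ∑ j', wt v δ μ i j')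

/-- The value `v_{ij} · exp(−μ_j)` (over extended indices), whose logarithm is
`log v_{ij} − μ_j` with the convention `log 0 = −∞`. -/
def valF {n m : ℕ} (v : Fin n → Fin m → ℝ) (μ : Fin m → ℝ) (i : Fin n) (j : Fin (m + 1)) : ℝ :=
  extV v i j * Real.exp (-extMu μ j)

/-- `h_i(μ) = max_{j ∈ {0,…,m}} (log v_{ij} − μ_j)`, realized as the logarithm of the
(positive) maximum of the values `v_{ij} e^{−μ_j}`. -/
def hMax {n m : ℕ} (v : Fin n → Fin m → ℝ) (μ : Fin m → ℝ) (i : Fin n) : ℝ :=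
  Real.log (Finset.univ.sup' Finset.univ_nonempty (valF v μ i))

/-- The nonsmooth objective `F`. -/
def Fobj {n m : ℕ} (B : Fin n → ℝ) (v : Fin n → Fin m → ℝ) (μ : Fin m → ℝ) : ℝ :=
  (∑ j, Real.exp (μ j)) + ∑ i, B i * hMax v μ i

/-- The active index set `𝒥_i(μ) = {j ∈ {0,…,m} : log v_{ij} − μ_j = h_i(μ)}`. -/
def activeSet {n m : ℕ} (v : Fin n → Fin m → ℝ) (μ : Fin m → ℝ) (i : Fin n) :
    Finset (Fin (m + 1)) :=
  Finset.univ.filter fun j =>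
    valF v μ i j = Finset.univ.sup' Finset.univ_nonempty (valF v μ i)

/-- The Euclidean norm on `ℝ^m`. -/
def enorm2 {m : ℕ} (x : Fin m → ℝ) : ℝ :=
  Real.sqrt (∑ j, x j ^ 2)

end

/-- at a global minimizer of `F`, every good `j ∈ [m]` is active for some
buyer, i.e. `[m] ⊆ ∪_i 𝒥_i(μ*)`. -/
theorem goods_covered_by_active_sets
    (n m : ℕ) (hn : 1 ≤ n) (hm : 1 ≤ m)
    (B : Fin n → ℝ) (hB : ∀ i, 0 < B i)
    (v : Fin n → Fin m → ℝ) (hv : ∀ i j, 0 ≤ v i j)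
    (μs : Fin m → ℝ) (hμs : ∀ ν : Fin m → ℝ, Fobj B v μs ≤ Fobj B v ν) :
    ∀ j : Fin m, ∃ i : Fin n, j.succ ∈ activeSet v μs i := by
  intro j
  by_contra hcon
  push_neg at hcon
  haveI : NeZero n := ⟨by omega⟩
  set M : Fin n → ℝ := fun i => Finset.univ.sup' Finset.univ_nonempty (valF v μs i) with hM
  have hval0 : ∀ (μ : Fin m → ℝ) i, valF v μ i 0 = 1 := by
    intro μ i; simp [valF, extV, extMu]
  have hMpos : ∀ i, 0 < M i := by
    intro i
    have h := Finset.le_sup' (valF v μs i) (Finset.mem_univ (0 : Fin (m + 1)))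
    rw [hval0] at h; linarith
  have hvalnn : ∀ (μ : Fin m → ℝ) i k, 0 ≤ valF v μ i k := by
    intro μ i k
    apply mul_nonneg _ (Real.exp_nonneg _)
    refine Fin.cases ?_ ?_ k
    · simp [extV]
    · intro k'; simpa [extV] using hv i k'
  have hlt : ∀ i, valF v μs i j.succ < M i := by
    intro i
    have hle := Finset.le_sup' (valF v μs i) (Finset.mem_univ j.succ)
    rcases lt_or_eq_of_le hle with h | h
    · exact h
    · exact absurd (by simp [activeSet, h]) (hcon i)
  set εf : Fin n → ℝ := fun i => if valF v μs i j.succ = 0 then 1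
      else Real.log (M i / valF v μs i j.succ) with hεf
  have hεfpos : ∀ i, 0 < εf i := by
    intro i
    by_cases h : valF v μs i j.succ = 0
    · simp [hεf, h]
    · have hp : 0 < valF v μs i j.succ := lt_of_le_of_ne (hvalnn μs i j.succ) (Ne.symm h)
      simp only [hεf, h, if_false]
      exact Real.log_pos ((one_lt_div hp).2 (hlt i))
  set ε : ℝ := Finset.univ.inf' Finset.univ_nonempty εf with hε
  have hεpos : 0 < ε := by
    rw [hε, Finset.lt_inf'_iff]
    intro b _; exact hεfpos b
  have hkey : ∀ i, valF v μs i j.succ * Real.exp ε ≤ M i := by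
    intro i
    by_cases h : valF v μs i j.succ = 0
    · rw [h, zero_mul]; exact (hMpos i).le
    · have hp : 0 < valF v μs i j.succ := lt_of_le_of_ne (hvalnn μs i j.succ) (Ne.symm h)
      have hle : ε ≤ εf i := Finset.inf'_le _ (Finset.mem_univ i)
      have : Real.exp ε ≤ M i / valF v μs i j.succ := by
        calc Real.exp ε ≤ Real.exp (εf i) := Real.exp_le_exp.2 hle
        _ = M i / valF v μs i j.succ := by
            rw [hεf]; simp only [h, if_false]
            exact Real.exp_log (div_pos (hMpos i) hp)
      calc valF v μs i j.succ * Real.exp ε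
          ≤ valF v μs i j.succ * (M i / valF v μs i j.succ) :=
            mul_le_mul_of_nonneg_left this hp.le
        _ = M i := by field_simp
  set ν : Fin m → ℝ := Function.update μs j (μs j - ε) with hν
  have hνj : ν j = μs j - ε := by simp [hν]
  have hνk : ∀ k, k ≠ j → ν k = μs k := by
    intro k hk; simp [hν, Function.update_of_ne hk]
  have hvalother : ∀ i k, k ≠ j.succ → valF v ν i k = valF v μs i k := by
    intro i k hk
    have : extMu ν k = extMu μs k := by
      rcases Fin.eq_zero_or_eq_succ k with h | ⟨k', rfl⟩
      · simp [h, extMu]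
      · have hk' : k' ≠ j := fun h => hk (by rw [h])
        simp only [extMu, Fin.cons_succ]
        exact hνk k' hk'
    simp [valF, this]
  have hvalj : ∀ i, valF v ν i j.succ = valF v μs i j.succ * Real.exp ε := by
    intro i
    simp only [valF, extMu, Fin.cons_succ, hνj]
    rw [mul_assoc, ← Real.exp_add]
    ring_nf
  -- the sup is unchanged
  have hsup : ∀ i, Finset.univ.sup' Finset.univ_nonempty (valF v ν i) = M i := by
    intro i
    apply le_antisymm
    · apply Finset.sup'_le
      intro k _
      by_cases hk : k = j.succ
      · rw [hk, hvalj i]; exact hkey i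
      · rw [hvalother i k hk]
        exact Finset.le_sup' (valF v μs i) (Finset.mem_univ k)
    · obtain ⟨k₀, _, hk₀⟩ := Finset.exists_mem_eq_sup' Finset.univ_nonempty (valF v μs i)
      have hk₀ne : k₀ ≠ j.succ := by
        intro h; rw [h] at hk₀
        exact absurd hk₀.symm (ne_of_lt (hlt i))
      have : valF v ν i k₀ = M i := by rw [hvalother i k₀ hk₀ne, ← hk₀]
      rw [← this]
      exact Finset.le_sup' (valF v ν i) (Finset.mem_univ k₀)
  have hhMax : ∀ i, hMax v ν i = hMax v μs i := by
    intro i; unfold hMax; rw [hsup i]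
  have hsumexp : (∑ k, Real.exp (ν k)) < ∑ k, Real.exp (μs k) := by
    apply Finset.sum_lt_sum
    · intro k _
      by_cases hk : k = j
      · rw [hk, hνj]; exact Real.exp_le_exp.2 (by linarith)
      · rw [hνk k hk]
    · exact ⟨j, Finset.mem_univ j, by
        rw [hνj]; exact Real.exp_lt_exp.2 (by linarith)⟩
  have hFlt : Fobj B v ν < Fobj B v μs := by
    unfold Fobj
    have : (∑ i, B i * hMax v ν i) = ∑ i, B i * hMax v μs i :=
      Finset.sum_congr rfl fun i _ => by rw [hhMax i]
    rw [this]
    linarith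
  exact absurd (hμs ν) (not_le.2 hFlt)
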